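/- arXiv:1811.06351 — 2 statements merged into one kernel-verified Lean document; each statement's English description precedes it below -/
import Mathlib

section
/- Let f : ℝ → ℝ be differentiable, and let q > 0, η > 1, p ∈ [0,q) with q ≤ η. Then ‖x ↦ ∫_ℝ [f(x+z) − f(x)] (max(|z|,1))^{−1−q} dz‖_{∞,p} ≤ (1 + 1/(q−p)) K_η ‖f'‖_{∞,η}, where K_η = 2^{η+4} η/(η−1). -/
open MeasureTheory Set Real

/-- Weighted supremum norm `‖f‖_{∞,p} = sup_x |f(x)| (|x| ∨ 1)^p`, with values in `[0,∞]`. -/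
noncomputable def wnorm (f : ℝ → ℝ) (p : ℝ) : ENNReal :=
  ⨆ x : ℝ, ENNReal.ofReal (|f x| * (max |x| 1) ^ p)

lemma even_intOn {g : ℝ → ℝ} (hg : ∀ z, g (-z) = g z) {r : ℝ} (h : IntegrableOn g (Ioi r)) :
    IntegrableOn g (Iic (-r)) := by
  rw [IntegrableOn, ← Measure.map_neg_eq_self (volume : Measure ℝ)]
  have m : MeasurableEmbedding fun x : ℝ => -x := (Homeomorph.neg ℝ).measurableEmbedding
  rw [m.restrict_map, m.integrable_map_iff]
  simp_rw [Function.comp_def, hg, neg_preimage, neg_Iic, neg_neg]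
  exact Iff.mpr integrableOn_Ici_iff_integrableOn_Ioi h

lemma even_int {g : ℝ → ℝ} (hg : ∀ z, g (-z) = g z) (r : ℝ) :
    ∫ z in Iic (-r), g z = ∫ z in Ioi r, g z := by
  rw [show Ioi r = Ioi (-(-r)) by ring_nf, ← integral_comp_neg_Iic]
  exact setIntegral_congr_fun measurableSet_Iic (fun z _ => (hg z).symm)

lemma compl_Ioo' (a b : ℝ) : (Ioo a b)ᶜ = Iic a ∪ Ici b := by
  ext y
  simp only [mem_compl_iff, mem_Ioo, not_and_or, not_lt, mem_union, mem_Iic, mem_Ici]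

lemma rho_even (s : ℝ) : ∀ z : ℝ, (max |(-z)| 1) ^ (-s) = (max |z| 1) ^ (-s) := by
  intro z; rw [abs_neg]

lemma rho_cont (s : ℝ) : Continuous (fun y : ℝ => (max |y| 1) ^ (-s)) :=
  (continuous_abs.max continuous_const).rpow_const (fun y => Or.inl (by positivity))

lemma rho_nonneg (s : ℝ) (y : ℝ) : 0 ≤ (max |y| 1) ^ (-s) := by positivity

lemma rho_le_one {s : ℝ} (hs : 0 ≤ s) (y : ℝ) : (max |y| 1) ^ (-s) ≤ 1 :=
  Real.rpow_le_one_of_one_le_of_nonpos (le_max_right _ _) (by linarith)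

lemma rho_eqOn {s r : ℝ} (hr : 1 ≤ r) :
    Set.EqOn (fun y : ℝ => (max |y| 1) ^ (-s)) (fun y : ℝ => y ^ (-s)) (Ioi r) := by
  intro y (hy : r < y)
  show (max |y| 1) ^ (-s) = y ^ (-s)
  rw [abs_of_pos (by linarith), max_eq_left (by linarith)]

lemma rho_tail_eq {s r : ℝ} (hs : 1 < s) (hr : 1 ≤ r) :
    ∫ y in Ioi r, (max |y| 1) ^ (-s) = r ^ (1 - s) / (s - 1) := by
  rw [setIntegral_congr_fun measurableSet_Ioi (rho_eqOn hr),
    integral_Ioi_rpow_of_lt (by linarith : -s < -1) (by linarith : (0:ℝ) < r),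
    show -s + 1 = 1 - s by ring]
  rw [div_eq_div_iff (by linarith : 1 - s ≠ 0) (by linarith : s - 1 ≠ 0)]
  ring

lemma rho_tail_intOn {s r : ℝ} (hs : 1 < s) (hr : 1 ≤ r) :
    IntegrableOn (fun y : ℝ => (max |y| 1) ^ (-s)) (Ioi r) :=
  ((integrableOn_Ioi_rpow_of_lt (by linarith : -s < -1) (by linarith : (0:ℝ) < r)).congr_fun
    (rho_eqOn hr).symm measurableSet_Ioi)

lemma rho_integrable {s : ℝ} (hs : 1 < s) :
    Integrable (fun y : ℝ => (max |y| 1) ^ (-s)) := by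
  have h1 := rho_tail_intOn hs le_rfl
  have h3 := even_intOn (rho_even s) h1
  have h2 : IntegrableOn (fun y : ℝ => (max |y| 1) ^ (-s)) (Icc (-1) 1) :=
    (rho_cont s).integrableOn_Icc
  have h := (h3.union h2).union h1
  rwa [Iic_union_Icc_eq_Iic (by norm_num), Iic_union_Ioi, integrableOn_univ] at h

lemma rho_integral_le {s : ℝ} (hs : 1 < s) :
    ∫ y : ℝ, (max |y| 1) ^ (-s) ≤ 2 + 2 / (s - 1) := by
  have hint := rho_integrable hs
  rw [← integral_add_compl (measurableSet_Ioo : MeasurableSet (Ioo (-1:ℝ) 1)) hint,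
    compl_Ioo']
  have hu : ∫ y in Iic (-1) ∪ Ici (1:ℝ), (max |y| 1) ^ (-s)
      = (∫ y in Iic (-1:ℝ), (max |y| 1) ^ (-s)) + ∫ y in Ici (1:ℝ), (max |y| 1) ^ (-s) :=
    setIntegral_union (by
      rw [Set.disjoint_iff]; rintro y ⟨(h1 : y ≤ -1), (h2 : 1 ≤ y)⟩; linarith)
      measurableSet_Ici hint.integrableOn hint.integrableOn
  rw [hu, even_int (rho_even s) 1, integral_Ici_eq_integral_Ioi, rho_tail_eq hs le_rfl,
    Real.one_rpow]
  have h2 : ∫ y in Ioo (-1:ℝ) 1, (max |y| 1) ^ (-s) ≤ 2 := by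
    calc ∫ y in Ioo (-1:ℝ) 1, (max |y| 1) ^ (-s) ≤ ∫ _y in Ioo (-1:ℝ) 1, (1:ℝ) := by
          apply setIntegral_mono_on hint.integrableOn (integrableOn_const (by
            rw [Real.volume_Ioo]; exact ENNReal.ofReal_ne_top)) measurableSet_Ioo
          intro y _; exact rho_le_one (by linarith) y
      _ = 2 := by rw [setIntegral_const, Real.volume_real_Ioo, smul_eq_mul, mul_one]; norm_num
  have h3 : (2:ℝ) * (1 / (s-1)) ≤ 2 / (s - 1) := by
    rw [mul_one_div]
  linarith [h2]

lemma scalar_gen (TT uu : ℝ) (h1 : 2 ≤ TT) (h2 : 0 < uu) :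
    2 + 2 * uu + 2 * TT * uu ≤ (1 + uu) * (8 * TT) := by
  nlinarith [mul_le_mul_of_nonneg_right h1 h2.le]

set_option maxHeartbeats 2000000 in
theorem stmt4 (f : ℝ → ℝ) (hf : Differentiable ℝ f) (p q η : ℝ)
    (hq : 0 < q) (hη : 1 < η) (hp0 : 0 ≤ p) (hpq : p < q) (hqη : q ≤ η)
    (hfin : wnorm (deriv f) η < ⊤) :
    wnorm (fun x => ∫ z : ℝ, (f (x + z) - f x) * (max |z| 1) ^ (-(1 + q))) p
      ≤ ENNReal.ofReal ((1 + 1 / (q - p)) * (2 ^ (η + 4) * η / (η - 1)))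
          * wnorm (deriv f) η := by
  set Mr : ℝ := (wnorm (deriv f) η).toReal with hMr
  have hMr0 : 0 ≤ Mr := ENNReal.toReal_nonneg
  -- pointwise bound on the derivative
  have hM : ∀ y : ℝ, |deriv f y| ≤ Mr * (max |y| 1) ^ (-η) := by
    intro y
    have h1 : ENNReal.ofReal (|deriv f y| * (max |y| 1) ^ η) ≤ wnorm (deriv f) η :=
      le_iSup (fun y : ℝ => ENNReal.ofReal (|deriv f y| * (max |y| 1) ^ η)) y
    have h2 : |deriv f y| * (max |y| 1) ^ η ≤ Mr :=
      (ENNReal.ofReal_le_iff_le_toReal hfin.ne).mp h1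
    have hXpos : (0:ℝ) < (max |y| 1) ^ η := by positivity
    rw [Real.rpow_neg (by positivity), ← div_eq_mul_inv, le_div_iff₀ hXpos]
    exact h2
  have hD : ∀ y : ℝ, |deriv f y| ≤ Mr := fun y =>
    (hM y).trans (by
      have := rho_le_one (le_of_lt (lt_trans one_pos hη)) y
      nlinarith [rho_nonneg η y])
  set T : ℝ := 2 + 2 / (η - 1) with hT
  have hT2 : 2 ≤ T := by
    rw [hT]
    have : 0 < 2 / (η - 1) := div_pos two_pos (by linarith)
    linarith
  -- deriv f is integrable
  have hintd : Integrable (deriv f) := by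
    refine Integrable.mono' ((rho_integrable hη).const_mul Mr)
      ((measurable_deriv f).aestronglyMeasurable) (Filter.Eventually.of_forall fun y => ?_)
    simpa [Real.norm_eq_abs] using hM y
  -- global bound: |f b - f a| ≤ Mr * T
  have hsub : ∀ a b : ℝ, a ≤ b → |f b - f a| ≤ Mr * T := by
    intro a b _
    have ftc : ∫ y in a..b, deriv f y = f b - f a :=
      intervalIntegral.integral_eq_sub_of_hasDerivAt (fun y _ => (hf y).hasDerivAt)
        hintd.intervalIntegrable
    rw [← ftc, ← Real.norm_eq_abs]
    calc ‖∫ y in a..b, deriv f y‖ ≤ ∫ y in Set.uIoc a b, ‖deriv f y‖ :=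
          intervalIntegral.norm_integral_le_integral_norm_uIoc
      _ ≤ ∫ y : ℝ, ‖deriv f y‖ :=
          setIntegral_le_integral hintd.norm
            (Filter.Eventually.of_forall fun y => norm_nonneg _)
      _ ≤ ∫ y : ℝ, Mr * (max |y| 1) ^ (-η) := by
          refine integral_mono hintd.norm ((rho_integrable hη).const_mul Mr) fun y => ?_
          simpa [Real.norm_eq_abs] using hM y
      _ = Mr * ∫ y : ℝ, (max |y| 1) ^ (-η) := integral_const_mul Mr _
      _ ≤ Mr * T := by
          refine mul_le_mul_of_nonneg_left ?_ hMr0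
          exact rho_integral_le hη
  have hglob : ∀ a b : ℝ, |f b - f a| ≤ Mr * T := by
    intro a b
    rcases le_total a b with h | h
    · exact hsub a b h
    · rw [abs_sub_comm]; exact hsub b a h
  -- the constant
  set C : ℝ := (1 + 1 / (q - p)) * (2 ^ (η + 4) * η / (η - 1)) with hC
  have hqp : 0 < q - p := by linarith
  have hC0 : 0 ≤ C := by
    have h1 : 0 < 1 + 1 / (q - p) := by
      have := one_div_pos.mpr hqp; linarith
    have h2 : 0 < 2 ^ (η + 4) * η / (η - 1) :=
      div_pos (mul_pos (Real.rpow_pos_of_pos two_pos _) (by linarith)) (by linarith)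
    exact le_of_lt (mul_pos h1 h2)
  -- main pointwise estimate
  have key : ∀ x : ℝ,
      |∫ z : ℝ, (f (x + z) - f x) * (max |z| 1) ^ (-(1 + q))| * (max |x| 1) ^ p ≤ C * Mr := by
    intro x
    set X : ℝ := max |x| 1 with hX
    have hX1 : (1:ℝ) ≤ X := le_max_right _ _
    have hX0 : (0:ℝ) < X := lt_of_lt_of_le one_pos hX1
    set r : ℝ := max (|x| / 2) 1 with hr
    have hr1 : (1:ℝ) ≤ r := le_max_right _ _
    have hr0 : (0:ℝ) < r := lt_of_lt_of_le one_pos hr1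
    have hrX : r ≤ X := max_le_max (by linarith [abs_nonneg x]) le_rfl
    have hX2r : X ≤ 2 * r := by
      rcases max_cases (|x| / 2) 1 with ⟨h1, h2⟩ | ⟨h1, h2⟩ <;>
        rcases max_cases |x| 1 with ⟨h3, h4⟩ | ⟨h3, h4⟩ <;> simp only [hX, hr] <;> linarith
    -- near Lipschitz bound
    have hnear : ∀ z : ℝ, |z| ≤ r →
        |f (x + z) - f x| ≤ Mr * 2 ^ η * X ^ (-η) * |z| := by
      intro z hz
      rcases le_or_gt |x| 2 with hx2 | hx2
      · -- global Lipschitz suffices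
        have lip : |f (x + z) - f x| ≤ Mr * |z| := by
          have := Convex.norm_image_sub_le_of_norm_deriv_le (𝕜 := ℝ) (s := univ)
            (fun y _ => hf y) (fun y _ => hD y) convex_univ (mem_univ x) (mem_univ (x + z))
          simpa [Real.norm_eq_abs, add_sub_cancel_left] using this
        have h1 : (1:ℝ) ≤ 2 ^ η * X ^ (-η) := by
          have hX2 : X ≤ 2 := max_le hx2 one_le_two
          have h2 : (2:ℝ) ^ (-η) ≤ X ^ (-η) :=
            Real.rpow_le_rpow_of_nonpos hX0 hX2 (by linarith)
          have h3 : (2:ℝ) ^ η * 2 ^ (-η) = 1 := by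
            rw [← Real.rpow_add two_pos]; simp
          calc (1:ℝ) = 2 ^ η * 2 ^ (-η) := h3.symm
            _ ≤ 2 ^ η * X ^ (-η) := by
                refine mul_le_mul_of_nonneg_left h2 (by positivity)
        calc |f (x + z) - f x| ≤ Mr * |z| := lip
          _ = Mr * 1 * |z| := by ring
          _ ≤ Mr * (2 ^ η * X ^ (-η)) * |z| := by
              refine mul_le_mul_of_nonneg_right (mul_le_mul_of_nonneg_left h1 hMr0) (abs_nonneg z)
          _ = Mr * 2 ^ η * X ^ (-η) * |z| := by ring
      · -- far from the origin
        have hrhalf : r = |x| / 2 := max_eq_left (by linarith)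
        have hXx : X = |x| := max_eq_left (by linarith)
        have hder : ∀ y : ℝ, |x| / 2 ≤ |y| → |deriv f y| ≤ Mr * 2 ^ η * X ^ (-η) := by
          intro y hy
          have hy1 : (1:ℝ) ≤ |y| := by linarith
          have hYeq : max |y| 1 = |y| := max_eq_left hy1
          have h2 : (max |y| 1) ^ (-η) ≤ (|x| / 2) ^ (-η) := by
            rw [hYeq]
            exact Real.rpow_le_rpow_of_nonpos (by linarith) hy (by linarith)
          have h3 : (|x| / 2) ^ (-η) = 2 ^ η * X ^ (-η) := by
            rw [hXx, Real.div_rpow (abs_nonneg x) (by norm_num : (0:ℝ) ≤ 2),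
              Real.rpow_neg (by norm_num : (0:ℝ) ≤ 2), div_eq_mul_inv, inv_inv, mul_comm]
          calc |deriv f y| ≤ Mr * (max |y| 1) ^ (-η) := hM y
            _ ≤ Mr * (|x| / 2) ^ (-η) := mul_le_mul_of_nonneg_left h2 hMr0
            _ = Mr * (2 ^ η * X ^ (-η)) := by rw [h3]
            _ = Mr * 2 ^ η * X ^ (-η) := by ring
        rcases lt_or_ge x 0 with hxneg | hxpos
        · -- x < 0 : use Iic (x/2)
          have hmem1 : x ∈ Iic (x / 2) := by simp only [mem_Iic]; linarith
          have hmem2 : x + z ∈ Iic (x / 2) := by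
            simp only [mem_Iic]
            have : z ≤ |z| := le_abs_self z
            have hxabs : |x| = -x := abs_of_neg hxneg
            rw [hrhalf, hxabs] at hz
            linarith
          have := Convex.norm_image_sub_le_of_norm_deriv_le (𝕜 := ℝ) (s := Iic (x / 2))
            (fun y _ => hf y)
            (fun y (hy : y ≤ x / 2) => by
              refine hder y ?_
              have hxabs : |x| = -x := abs_of_neg hxneg
              have : y ≤ x / 2 := hy
              have hyneg : y < 0 := by nlinarith
              rw [abs_of_neg hyneg, hxabs]; linarith)
            (convex_Iic _) hmem1 hmem2
          simpa [Real.norm_eq_abs, add_sub_cancel_left] using this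
        · -- 0 ≤ x : use Ici (x/2)
          have hxabs : |x| = x := abs_of_nonneg hxpos
          have hmem1 : x ∈ Ici (x / 2) := by simp only [mem_Ici]; linarith
          have hmem2 : x + z ∈ Ici (x / 2) := by
            simp only [mem_Ici]
            have : -|z| ≤ z := neg_abs_le z
            rw [hrhalf, hxabs] at hz
            linarith
          have := Convex.norm_image_sub_le_of_norm_deriv_le (𝕜 := ℝ) (s := Ici (x / 2))
            (fun y _ => hf y)
            (fun y (hy : x / 2 ≤ y) => by
              refine hder y ?_
              have hypos : 0 < y := by nlinarith
              rw [abs_of_pos hypos, hxabs]; linarith)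
            (convex_Ici _) hmem1 hmem2
          simpa [Real.norm_eq_abs, add_sub_cancel_left] using this
    -- integrand and its integrability
    have hs1 : (1:ℝ) < 1 + q := by linarith
    set g : ℝ → ℝ := fun z => (f (x + z) - f x) * (max |z| 1) ^ (-(1 + q)) with hgdef
    have hgcont : Continuous g :=
      ((hf.continuous.comp (continuous_const.add continuous_id)).sub continuous_const).mul
        (rho_cont (1 + q))
    have hgbound : ∀ z, |g z| ≤ (Mr * T) * (max |z| 1) ^ (-(1 + q)) := by
      intro z
      rw [hgdef]
      show |(f (x + z) - f x) * (max |z| 1) ^ (-(1 + q))| ≤ _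
      rw [abs_mul, abs_of_nonneg (rho_nonneg _ z)]
      exact mul_le_mul_of_nonneg_right (hglob x (x + z)) (rho_nonneg _ z)
    have hgint : Integrable g :=
      Integrable.mono' ((rho_integrable hs1).const_mul (Mr * T)) hgcont.aestronglyMeasurable
        (Filter.Eventually.of_forall fun z => by
          simpa [Real.norm_eq_abs] using hgbound z)
    set s' : ℝ := q + (η - p) with hs'def
    have hs' : (1:ℝ) < s' := by rw [hs'def]; linarith
    have h2η : (0:ℝ) < 2 ^ η := Real.rpow_pos_of_pos two_pos η
    set K1 : ℝ := Mr * 2 ^ η * X ^ (-η) * r ^ (η - p) with hK1def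
    have hK1 : 0 ≤ K1 := by
      refine mul_nonneg (mul_nonneg (mul_nonneg hMr0 h2η.le) ?_) ?_
      · exact (Real.rpow_pos_of_pos hX0 _).le
      · exact (Real.rpow_pos_of_pos hr0 _).le
    -- pointwise near bound
    have hptnear : ∀ z ∈ Ioo (-r) r, |g z| ≤ K1 * (max |z| 1) ^ (-s') := by
      intro z hz
      have hzr : |z| ≤ r := (abs_lt.mpr ⟨hz.1, hz.2⟩).le
      have hZ1 : (1:ℝ) ≤ max |z| 1 := le_max_right _ _
      have hZ0 : (0:ℝ) < max |z| 1 := lt_of_lt_of_le one_pos hZ1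
      have hZr : max |z| 1 ≤ r := max_le hzr hr1
      have h1 : |g z| ≤ (Mr * 2 ^ η * X ^ (-η)) * (|z| * (max |z| 1) ^ (-(1 + q))) := by
        rw [hgdef]
        show |(f (x + z) - f x) * (max |z| 1) ^ (-(1 + q))| ≤ _
        rw [abs_mul, abs_of_nonneg (rho_nonneg _ z)]
        calc |f (x + z) - f x| * (max |z| 1) ^ (-(1 + q))
            ≤ (Mr * 2 ^ η * X ^ (-η) * |z|) * (max |z| 1) ^ (-(1 + q)) :=
              mul_le_mul_of_nonneg_right (hnear z hzr) (rho_nonneg _ z)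
          _ = (Mr * 2 ^ η * X ^ (-η)) * (|z| * (max |z| 1) ^ (-(1 + q))) := by ring
      have h2 : |z| * (max |z| 1) ^ (-(1 + q)) ≤ r ^ (η - p) * (max |z| 1) ^ (-s') := by
        have e1 : |z| * (max |z| 1) ^ (-(1 + q)) ≤ (max |z| 1) * (max |z| 1) ^ (-(1 + q)) :=
          mul_le_mul_of_nonneg_right (le_max_left _ _) (rho_nonneg _ z)
        have e2 : (max |z| 1) * (max |z| 1) ^ (-(1 + q)) = (max |z| 1) ^ (-q) := by
          calc (max |z| 1) * (max |z| 1) ^ (-(1 + q))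
              = (max |z| 1) ^ (1:ℝ) * (max |z| 1) ^ (-(1 + q)) := by rw [Real.rpow_one]
            _ = (max |z| 1) ^ (1 + -(1 + q)) := (Real.rpow_add hZ0 _ _).symm
            _ = (max |z| 1) ^ (-q) := by ring_nf
        have e3 : (max |z| 1) ^ (-q) = (max |z| 1) ^ (η - p) * (max |z| 1) ^ (-s') := by
          rw [← Real.rpow_add hZ0]
          congr 1
          rw [hs'def]; ring
        have e4 : (max |z| 1) ^ (η - p) ≤ r ^ (η - p) :=
          Real.rpow_le_rpow hZ0.le hZr (by linarith)
        calc |z| * (max |z| 1) ^ (-(1 + q)) ≤ (max |z| 1) ^ (-q) := by rw [← e2]; exact e1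
          _ = (max |z| 1) ^ (η - p) * (max |z| 1) ^ (-s') := e3
          _ ≤ r ^ (η - p) * (max |z| 1) ^ (-s') :=
              mul_le_mul_of_nonneg_right e4 (rho_nonneg _ z)
      calc |g z| ≤ (Mr * 2 ^ η * X ^ (-η)) * (|z| * (max |z| 1) ^ (-(1 + q))) := h1
        _ ≤ (Mr * 2 ^ η * X ^ (-η)) * (r ^ (η - p) * (max |z| 1) ^ (-s')) := by
            refine mul_le_mul_of_nonneg_left h2 ?_
            exact mul_nonneg (mul_nonneg hMr0 h2η.le) (Real.rpow_pos_of_pos hX0 _).le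
        _ = K1 * (max |z| 1) ^ (-s') := by rw [hK1def]; ring
    -- near integral bound
    have I1 : ∫ z in Ioo (-r) r, |g z| ≤ K1 * (2 + 2 / (s' - 1)) := by
      calc ∫ z in Ioo (-r) r, |g z|
          ≤ ∫ z in Ioo (-r) r, K1 * (max |z| 1) ^ (-s') :=
            setIntegral_mono_on hgint.abs.integrableOn
              ((rho_integrable hs').const_mul K1).integrableOn measurableSet_Ioo hptnear
        _ ≤ ∫ z : ℝ, K1 * (max |z| 1) ^ (-s') :=
            setIntegral_le_integral ((rho_integrable hs').const_mul K1)
              (Filter.Eventually.of_forall fun z => mul_nonneg hK1 (rho_nonneg _ z))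
        _ = K1 * ∫ z : ℝ, (max |z| 1) ^ (-s') := integral_const_mul K1 _
        _ ≤ K1 * (2 + 2 / (s' - 1)) :=
            mul_le_mul_of_nonneg_left (rho_integral_le hs') hK1
    -- far integral bound
    have hMT : 0 ≤ Mr * T := mul_nonneg hMr0 (by linarith)
    have hwint := rho_integrable hs1
    have hfarptw : ∀ ss : Set ℝ, MeasurableSet ss →
        ∫ z in ss, |g z| ≤ ∫ z in ss, (Mr * T) * (max |z| 1) ^ (-(1 + q)) := by
      intro ss hss
      exact setIntegral_mono_on hgint.abs.integrableOn
        (hwint.const_mul (Mr * T)).integrableOn hss (fun z _ => hgbound z)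
    have heven : ∀ z : ℝ, (Mr * T) * (max |(-z)| 1) ^ (-(1 + q))
        = (Mr * T) * (max |z| 1) ^ (-(1 + q)) := fun z => by rw [rho_even]
    have htail : ∫ z in Ioi r, (Mr * T) * (max |z| 1) ^ (-(1 + q))
        = (Mr * T) * (r ^ (1 - (1 + q)) / ((1 + q) - 1)) := by
      rw [integral_const_mul, rho_tail_eq hs1 hr1]
    have I2 : ∫ z in (Ioo (-r) r)ᶜ, |g z|
        ≤ 2 * ((Mr * T) * (r ^ (1 - (1 + q)) / ((1 + q) - 1))) := by
      rw [compl_Ioo']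
      have hdisj : Disjoint (Iic (-r)) (Ici r) := by
        rw [Set.disjoint_iff]; rintro y ⟨(h1 : y ≤ -r), (h2 : r ≤ y)⟩
        exact absurd rfl (by intro _; linarith : ¬ (0:ℝ) = 0)
      rw [setIntegral_union hdisj measurableSet_Ici hgint.abs.integrableOn
        hgint.abs.integrableOn, integral_Ici_eq_integral_Ioi]
      have b1 := hfarptw (Iic (-r)) measurableSet_Iic
      have b1' : ∫ z in Iic (-r), (Mr * T) * (max |z| 1) ^ (-(1 + q))
          = ∫ z in Ioi r, (Mr * T) * (max |z| 1) ^ (-(1 + q)) := even_int heven r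
      rw [b1'] at b1
      have b2 : ∫ z in Ioi r, |g z| ≤ ∫ z in Ioi r, (Mr * T) * (max |z| 1) ^ (-(1 + q)) :=
        setIntegral_mono_on hgint.abs.integrableOn
          (hwint.const_mul (Mr * T)).integrableOn measurableSet_Ioi (fun z _ => hgbound z)
      rw [htail] at b1 b2
      linarith
    -- assemble
    have hsplit : ∫ z : ℝ, |g z|
        = (∫ z in Ioo (-r) r, |g z|) + ∫ z in (Ioo (-r) r)ᶜ, |g z| :=
      (integral_add_compl measurableSet_Ioo hgint.abs).symm
    have habs : |∫ z : ℝ, g z| ≤ K1 * (2 + 2 / (s' - 1))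
        + 2 * ((Mr * T) * (r ^ (1 - (1 + q)) / ((1 + q) - 1))) := by
      calc |∫ z : ℝ, g z| ≤ ∫ z : ℝ, |g z| := by
            simpa [Real.norm_eq_abs] using norm_integral_le_integral_norm g
        _ = _ := hsplit
        _ ≤ _ := add_le_add I1 I2
    -- now multiply by X^p and do arithmetic
    have hXp0 : (0:ℝ) < X ^ p := Real.rpow_pos_of_pos hX0 p
    have step : |∫ z : ℝ, g z| * X ^ p ≤ (K1 * (2 + 2 / (s' - 1))
        + 2 * ((Mr * T) * (r ^ (1 - (1 + q)) / ((1 + q) - 1)))) * X ^ p :=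
      mul_le_mul_of_nonneg_right habs hXp0.le
    -- bound term 1
    have e5 : X ^ (-η) * r ^ (η - p) * X ^ p ≤ 1 := by
      have f1 : r ^ (η - p) ≤ X ^ (η - p) :=
        Real.rpow_le_rpow hr0.le hrX (by linarith)
      have f2 : X ^ (-η) * X ^ (η - p) * X ^ p = 1 := by
        rw [← Real.rpow_add hX0, ← Real.rpow_add hX0,
          show -η + (η - p) + p = 0 by ring, Real.rpow_zero]
      calc X ^ (-η) * r ^ (η - p) * X ^ p ≤ X ^ (-η) * X ^ (η - p) * X ^ p := by
            refine mul_le_mul_of_nonneg_right (mul_le_mul_of_nonneg_left f1 ?_) hXp0.le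
            exact (Real.rpow_pos_of_pos hX0 _).le
        _ = 1 := f2
    have hu : 2 + 2 / (s' - 1) ≤ 2 + 2 / (q - p) := by
      have : q - p ≤ s' - 1 := by rw [hs'def]; linarith
      have h1 : 2 / (s' - 1) ≤ 2 / (q - p) :=
        div_le_div_of_nonneg_left (by norm_num) hqp this
      linarith
    have term1 : K1 * (2 + 2 / (s' - 1)) * X ^ p ≤ Mr * 2 ^ η * (2 + 2 / (q - p)) := by
      have h0 : 0 ≤ 2 + 2 / (s' - 1) := by
        have : 0 < 2 / (s' - 1) := div_pos two_pos (by linarith)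
        linarith
      calc K1 * (2 + 2 / (s' - 1)) * X ^ p
          = (Mr * 2 ^ η) * (2 + 2 / (s' - 1)) * (X ^ (-η) * r ^ (η - p) * X ^ p) := by
            rw [hK1def]; ring
        _ ≤ (Mr * 2 ^ η) * (2 + 2 / (s' - 1)) * 1 := by
            refine mul_le_mul_of_nonneg_left e5 ?_
            exact mul_nonneg (mul_nonneg hMr0 h2η.le) h0
        _ = (Mr * 2 ^ η) * (2 + 2 / (s' - 1)) := by ring
        _ ≤ Mr * 2 ^ η * (2 + 2 / (q - p)) :=
            mul_le_mul_of_nonneg_left hu (mul_nonneg hMr0 h2η.le)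
    -- bound term 2
    have e6 : r ^ (1 - (1 + q)) * X ^ p ≤ 2 ^ η := by
      have g0 : r ^ (1 - (1 + q)) = r ^ (-q) := by
        rw [show (1:ℝ) - (1 + q) = -q by ring]
      have g1 : r ^ (-q) ≤ (X / 2) ^ (-q) :=
        Real.rpow_le_rpow_of_nonpos (by linarith) (by linarith) (by linarith)
      have g2 : (X / 2) ^ (-q) = 2 ^ q * X ^ (-q) := by
        rw [Real.div_rpow hX0.le (by norm_num : (0:ℝ) ≤ 2),
          Real.rpow_neg (by norm_num : (0:ℝ) ≤ 2), div_eq_mul_inv, inv_inv, mul_comm]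
      have g3 : X ^ (-q) * X ^ p = X ^ (p - q) := by
        rw [← Real.rpow_add hX0, show -q + p = p - q by ring]
      have g4 : X ^ (p - q) ≤ 1 :=
        Real.rpow_le_one_of_one_le_of_nonpos hX1 (by linarith)
      have g5 : (2:ℝ) ^ q ≤ 2 ^ η :=
        Real.rpow_le_rpow_of_exponent_le one_le_two hqη
      calc r ^ (1 - (1 + q)) * X ^ p = r ^ (-q) * X ^ p := by rw [g0]
        _ ≤ (X / 2) ^ (-q) * X ^ p := mul_le_mul_of_nonneg_right g1 hXp0.le
        _ = 2 ^ q * (X ^ (-q) * X ^ p) := by rw [g2]; ring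
        _ = 2 ^ q * X ^ (p - q) := by rw [g3]
        _ ≤ 2 ^ q * 1 :=
            mul_le_mul_of_nonneg_left g4 (Real.rpow_pos_of_pos two_pos q).le
        _ = 2 ^ q := mul_one _
        _ ≤ 2 ^ η := g5
    have term2 : 2 * ((Mr * T) * (r ^ (1 - (1 + q)) / ((1 + q) - 1))) * X ^ p
        ≤ 2 * Mr * T * 2 ^ η / q := by
      have g0 : ((1:ℝ) + q) - 1 = q := by ring
      calc 2 * ((Mr * T) * (r ^ (1 - (1 + q)) / ((1 + q) - 1))) * X ^ p
          = 2 * (Mr * T) * (r ^ (1 - (1 + q)) * X ^ p) / q := by rw [g0]; ring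
        _ ≤ 2 * (Mr * T) * 2 ^ η / q := by
            refine div_le_div_of_nonneg_right ?_ hq.le
            exact mul_le_mul_of_nonneg_left e6 (by positivity)
        _ = 2 * Mr * T * 2 ^ η / q := by ring
    -- final arithmetic
    have final : |∫ z : ℝ, g z| * X ^ p
        ≤ Mr * 2 ^ η * (2 + 2 / (q - p)) + 2 * Mr * T * 2 ^ η / q := by
      refine step.trans ?_
      rw [add_mul]
      exact add_le_add term1 term2
    have hu0 : (0:ℝ) < 1 / (q - p) := one_div_pos.mpr hqp
    have huq : (1:ℝ) / q ≤ 1 / (q - p) :=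
      one_div_le_one_div_of_le hqp (by linarith : q - p ≤ q)
    have hTeq : (2:ℝ) ^ (η + 4) * η / (η - 1) = 8 * 2 ^ η * T := by
      have h16 : (2:ℝ) ^ (4:ℝ) = 16 := by
        rw [show (4:ℝ) = ((4:ℕ):ℝ) by norm_num, Real.rpow_natCast]; norm_num
      have hη1 : η - 1 ≠ 0 := by intro h; rw [sub_eq_zero] at h; linarith [h.symm]
      rw [hT, Real.rpow_add two_pos, h16, div_eq_iff hη1]
      field_simp
      ring
    have arith : Mr * 2 ^ η * (2 + 2 / (q - p)) + 2 * Mr * T * 2 ^ η / q ≤ C * Mr := by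
      have hME : 0 ≤ Mr * 2 ^ η := mul_nonneg hMr0 h2η.le
      have s0 : Mr * 2 ^ η * (2 + 2 / (q - p)) + 2 * Mr * T * 2 ^ η / q
          = Mr * 2 ^ η * (2 + 2 / (q - p) + 2 * T * (1 / q)) := by ring
      have s1 : 2 + 2 / (q - p) + 2 * T * (1 / q)
          ≤ 2 + 2 * (1 / (q - p)) + 2 * T * (1 / (q - p)) := by
        have c1 : 2 * T * (1 / q) ≤ 2 * T * (1 / (q - p)) :=
          mul_le_mul_of_nonneg_left huq (by linarith : (0:ℝ) ≤ 2 * T)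
        have c2 : 2 / (q - p) = 2 * (1 / (q - p)) := (mul_one_div 2 _).symm
        linarith [c1, c2.le, c2.ge]
      have s2 : 2 + 2 * (1 / (q - p)) + 2 * T * (1 / (q - p))
          ≤ (1 + 1 / (q - p)) * (8 * T) := scalar_gen T (1 / (q - p)) hT2 hu0
      have s3 : Mr * 2 ^ η * (2 + 2 / (q - p) + 2 * T * (1 / q))
          ≤ Mr * 2 ^ η * ((1 + 1 / (q - p)) * (8 * T)) :=
        mul_le_mul_of_nonneg_left (s1.trans s2) hME
      have s4 : Mr * 2 ^ η * ((1 + 1 / (q - p)) * (8 * T)) = C * Mr := by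
        rw [hC, hTeq]; ring
      rw [s0]
      rw [← s4]
      exact s3
    exact final.trans arith
  -- conclude
  have hle : ENNReal.ofReal C * wnorm (deriv f) η = ENNReal.ofReal (C * Mr) := by
    rw [ENNReal.ofReal_mul hC0, hMr, ENNReal.ofReal_toReal hfin.ne]
  rw [hle]
  show wnorm _ p ≤ _
  rw [wnorm]
  exact iSup_le fun x => ENNReal.ofReal_le_ofReal (key x)
end

section
/- Let f : ℝ → ℝ be twice continuously differentiable with f and f'' bounded. Then the map α ↦ f^{[α]}(0) = ∫_ℝ [f(z) − f(0) − f'(0) z 𝟙_{|z|≤1}] |z|^{−1−α} dz is continuously differentiable on (0,2), with derivative d/dα f^{[α]}(0) = −∫_ℝ [f(z) − f(0) − f'(0) z 𝟙_{|z|≤1}] |z|^{−1−α} ln|z| dz. -/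
open MeasureTheory Real Set Filter Metric

private lemma key_int {p q : ℝ} (hp : p < -1) (hq : -1 < q) :
    Integrable (fun z : ℝ => if |z| ≤ 1 then |z| ^ q else |z| ^ p) := by
  set W : ℝ → ℝ := fun z => if |z| ≤ 1 then |z| ^ q else |z| ^ p with hW
  have hWeven : ∀ z, W (-z) = W z := by intro z; simp [hW, abs_neg]
  have hpos : IntegrableOn W (Ioi 0) := by
    have h1 : IntegrableOn W (Ioc 0 1) := by
      rw [integrableOn_Ioc_iff_integrableOn_Ioo]
      refine ((intervalIntegral.integrableOn_Ioo_rpow_iff one_pos).2 hq).congr_fun ?_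
        measurableSet_Ioo
      intro z hz
      simp only [hW]
      rw [abs_of_pos hz.1, if_pos hz.2.le]
    have h2 : IntegrableOn W (Ioi 1) := by
      refine ((integrableOn_Ioi_rpow_iff one_pos).2 hp).congr_fun ?_ measurableSet_Ioi
      intro z hz
      have hz1 : (1:ℝ) < z := hz
      simp only [hW]
      rw [abs_of_pos (lt_trans one_pos hz1), if_neg (not_le.2 hz1)]
    have := h1.union h2
    rwa [Ioc_union_Ioi_eq_Ioi zero_le_one] at this
  have hneg : IntegrableOn W (Iio 0) := by
    have := (MeasurePreserving.integrableOn_comp_preimage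
      (Measure.measurePreserving_neg (volume : Measure ℝ))
      (Homeomorph.neg ℝ).measurableEmbedding).2 hpos
    have heq : (W ∘ Neg.neg) = W := funext fun z => hWeven z
    have hset : (Neg.neg ⁻¹' Ioi (0:ℝ)) = Iio 0 := by ext x; simp
    rwa [heq, hset] at this
  rw [← integrableOn_univ, show (univ : Set ℝ) = Iio 0 ∪ Ici 0 by simp [Iio_union_Ici]]
  exact hneg.union ((integrableOn_Ici_iff_integrableOn_Ioi enorm_ne_top).2 hpos)

private lemma g_zero {C : ℝ} {g : ℝ → ℝ} (hg : ∀ z, |g z| ≤ C * min (z ^ 2) 1) : g 0 = 0 := by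
  have := hg 0
  simp only [ne_eq, OfNat.ofNat_ne_zero, not_false_eq_true, zero_pow, zero_le_one, min_eq_left,
    mul_zero] at this
  exact abs_eq_zero.1 (le_antisymm this (abs_nonneg _))

private lemma main_bound {C a b : ℝ} (hC : 0 ≤ C) (ha : 0 < a) (hb : b < 2) (hab : a ≤ b)
    {g : ℝ → ℝ} (hg : ∀ z, |g z| ≤ C * min (z ^ 2) 1) :
    ∃ B : ℝ → ℝ, Integrable B ∧ ∀ α ∈ Icc a b, ∀ z : ℝ,
      |g z| * (1 + |Real.log (abs z)|) / |z| ^ (1 + α) ≤ B z := by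
  set δ := min a (2 - b) / 2 with hδdef
  have hδ : 0 < δ := by
    have : 0 < min a (2 - b) := lt_min ha (by linarith)
    positivity
  have hδa : δ < a := by
    have h1 : min a (2 - b) ≤ a := min_le_left _ _
    rw [hδdef]; linarith
  have hδb : δ < 2 - b := by
    have h1 : min a (2 - b) ≤ 2 - b := min_le_right _ _
    rw [hδdef]; linarith
  have hK : 0 ≤ C * (1 + 1 / δ) := by positivity
  refine ⟨fun z => C * (1 + 1 / δ) * (if |z| ≤ 1 then |z| ^ (1 - b - δ) else |z| ^ (δ - (1 + a))),
    (key_int (by linarith) (by linarith)).const_mul _, ?_⟩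
  intro α hα z
  beta_reduce
  have hαa : 0 < α := lt_of_lt_of_le ha hα.1
  rcases eq_or_ne z 0 with rfl | hz
  · rw [g_zero hg]
    simp only [abs_zero, Real.log_zero, zero_mul, abs_zero, add_zero, mul_one, zero_div]
    positivity
  · have hz' : 0 < |z| := abs_pos.2 hz
    have hT : 0 < |z| ^ (1 + α) := Real.rpow_pos_of_pos hz' _
    by_cases h1 : |z| ≤ 1
    · rw [if_pos h1]
      -- bound on 1 + |log|z||
      have hlog : 1 + |Real.log (abs z)| ≤ (1 + 1 / δ) * |z| ^ (-δ) := by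
        have hlz : Real.log |z| ≤ 0 := Real.log_nonpos (abs_nonneg z) h1
        have h2 : |Real.log (abs z)| = Real.log (|z|⁻¹) := by
          rw [Real.log_inv, abs_of_nonpos hlz]
        have h3 : Real.log (|z|⁻¹) ≤ (|z|⁻¹) ^ δ / δ :=
          Real.log_le_rpow_div (by positivity) hδ
        have h4 : (|z|⁻¹) ^ δ = |z| ^ (-δ) := by
          rw [Real.inv_rpow (abs_nonneg z), ← Real.rpow_neg (abs_nonneg z)]
        have h5 : (1:ℝ) ≤ |z| ^ (-δ) :=
          Real.one_le_rpow_of_pos_of_le_one_of_nonpos hz' h1 (by linarith)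
        rw [h2]
        calc 1 + Real.log (|z|⁻¹) ≤ |z| ^ (-δ) + |z| ^ (-δ) / δ := by
              rw [← h4] at h5 ⊢; linarith
          _ = (1 + 1 / δ) * |z| ^ (-δ) := by ring
      have hgz : |g z| ≤ C * |z| ^ (2:ℝ) := by
        have hsq : z ^ 2 ≤ 1 := by
          have := sq_abs z ▸ pow_le_one₀ (abs_nonneg z) h1
          simpa [sq_abs] using pow_le_one₀ (abs_nonneg z) h1 (n := 2)
        have : min (z ^ 2) 1 = z ^ 2 := min_eq_left hsq
        calc |g z| ≤ C * min (z ^ 2) 1 := hg z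
          _ = C * z ^ 2 := by rw [this]
          _ = C * |z| ^ (2:ℝ) := by
              rw [show ((2:ℝ)) = ((2:ℕ):ℝ) by norm_num, Real.rpow_natCast, sq_abs]
      calc |g z| * (1 + |Real.log (abs z)|) / |z| ^ (1 + α)
          ≤ (C * |z| ^ (2:ℝ)) * ((1 + 1 / δ) * |z| ^ (-δ)) / |z| ^ (1 + α) := by
            apply div_le_div_of_nonneg_right ?_ hT.le |>.trans_eq rfl
            exact mul_le_mul hgz hlog (by positivity) (by positivity)
        _ = C * (1 + 1 / δ) * |z| ^ (1 - α - δ) := by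
            have hexp : |z| ^ (2:ℝ) * |z| ^ (-δ) * |z| ^ (-(1 + α)) = |z| ^ (1 - α - δ) := by
              rw [← Real.rpow_add hz', ← Real.rpow_add hz']
              congr 1 <;> ring
            rw [div_eq_mul_inv, ← Real.rpow_neg (abs_nonneg z), ← hexp]; ring
        _ ≤ C * (1 + 1 / δ) * |z| ^ (1 - b - δ) := by
            apply mul_le_mul_of_nonneg_left _ hK
            exact Real.rpow_le_rpow_of_exponent_ge hz' h1 (by linarith [hα.2])
    · rw [if_neg h1]
      push_neg at h1
      have h1' : (1:ℝ) ≤ |z| := h1.le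
      have hlog : 1 + |Real.log (abs z)| ≤ (1 + 1 / δ) * |z| ^ δ := by
        have hlz : 0 ≤ Real.log |z| := Real.log_nonneg h1'
        have h3 : Real.log |z| ≤ |z| ^ δ / δ := Real.log_le_rpow_div (abs_nonneg z) hδ
        have h5 : (1:ℝ) ≤ |z| ^ δ := Real.one_le_rpow h1' hδ.le
        rw [abs_of_nonneg hlz]
        calc 1 + Real.log |z| ≤ |z| ^ δ + |z| ^ δ / δ := by linarith
          _ = (1 + 1 / δ) * |z| ^ δ := by ring
      have hgz : |g z| ≤ C := by
        have hsq : (1:ℝ) ≤ z ^ 2 := by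
          rw [← sq_abs]; exact one_le_pow₀ h1'
        calc |g z| ≤ C * min (z ^ 2) 1 := hg z
          _ = C * 1 := by rw [min_eq_right hsq]
          _ = C := mul_one C
      calc |g z| * (1 + |Real.log (abs z)|) / |z| ^ (1 + α)
          ≤ (C * ((1 + 1 / δ) * |z| ^ δ)) / |z| ^ (1 + α) := by
            apply div_le_div_of_nonneg_right ?_ hT.le |>.trans_eq rfl
            exact mul_le_mul hgz hlog (by positivity) (by positivity)
        _ = C * (1 + 1 / δ) * |z| ^ (δ - (1 + α)) := by
            have hexp : |z| ^ δ * |z| ^ (-(1 + α)) = |z| ^ (δ - (1 + α)) := by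
              rw [← Real.rpow_add hz']
              congr 1 <;> ring
            rw [div_eq_mul_inv, ← Real.rpow_neg (abs_nonneg z), ← hexp]; ring
        _ ≤ C * (1 + 1 / δ) * |z| ^ (δ - (1 + a)) := by
            apply mul_le_mul_of_nonneg_left _ hK
            exact Real.rpow_le_rpow_of_exponent_le h1' (by linarith [hα.1])

private lemma meas_F {g : ℝ → ℝ} (hgm : Measurable g) (α : ℝ) (hα : 0 < α) :
    AEStronglyMeasurable (fun z : ℝ => g z / |z| ^ (1 + α)) volume := by
  have h1 : Measurable fun z : ℝ => |z| ^ (1 + α) :=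
    ((Real.continuous_rpow_const (by linarith)).comp continuous_abs).measurable
  exact (hgm.div h1).aestronglyMeasurable

private lemma meas_F' {g : ℝ → ℝ} (hgm : Measurable g) (α : ℝ) (hα : 0 < α) :
    AEStronglyMeasurable (fun z : ℝ => -(g z * Real.log (abs z) / |z| ^ (1 + α))) volume := by
  have h1 : Measurable fun z : ℝ => |z| ^ (1 + α) :=
    ((Real.continuous_rpow_const (by linarith)).comp continuous_abs).measurable
  have h2 : Measurable fun z : ℝ => Real.log (abs z) := Real.measurable_log.comp measurable_abs
  exact (((hgm.mul h2).div h1).neg).aestronglyMeasurable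

private lemma pt_deriv {g : ℝ → ℝ} {C : ℝ} (hg : ∀ z, |g z| ≤ C * min (z ^ 2) 1)
    (z : ℝ) (x : ℝ) (hx : 0 < x) :
    HasDerivAt (fun α : ℝ => g z / |z| ^ (1 + α))
      (-(g z * Real.log (abs z) / |z| ^ (1 + x))) x := by
  rcases eq_or_ne z 0 with rfl | hz
  · have hg0 : g 0 = 0 := g_zero hg
    have hfun : (fun α : ℝ => g 0 / |(0:ℝ)| ^ (1 + α)) = fun _ => (0:ℝ) := by
      funext α; rw [hg0]; simp
    rw [hfun, hg0]
    simpa using hasDerivAt_const x (0:ℝ)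
  · have hz' : 0 < |z| := abs_pos.2 hz
    have hfun : (fun α : ℝ => g z / |z| ^ (1 + α)) = fun α => g z * |z| ^ (-(1 + α)) := by
      funext α
      rw [Real.rpow_neg (abs_nonneg z), div_eq_mul_inv]
    rw [hfun]
    have hinner : HasDerivAt (fun α : ℝ => -(1 + α)) (-1) x := by
      exact ((hasDerivAt_id x).const_add (1:ℝ)).neg
    have houter : HasDerivAt (fun t : ℝ => |z| ^ t)
        (|z| ^ (-(1 + x)) * Real.log |z|) (-(1 + x)) :=
      (Real.hasStrictDerivAt_const_rpow hz' _).hasDerivAt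
    have := (houter.comp x hinner).const_mul (g z)
    refine this.congr_deriv ?_
    rw [Real.rpow_neg (abs_nonneg z)]
    ring

private lemma hasDeriv_main {g : ℝ → ℝ} (hgm : Measurable g) {C : ℝ} (hC : 0 ≤ C)
    (hg : ∀ z, |g z| ≤ C * min (z ^ 2) 1) {α₀ : ℝ} (hα₀ : α₀ ∈ Ioo (0:ℝ) 2) :
    HasDerivAt (fun α : ℝ => ∫ z : ℝ, g z / |z| ^ (1 + α))
      (-∫ z : ℝ, g z * Real.log (abs z) / |z| ^ (1 + α₀)) α₀ := by
  obtain ⟨h0, h2⟩ := hα₀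
  set ε := min α₀ (2 - α₀) / 2 with hεdef
  have hε : 0 < ε := by
    have : 0 < min α₀ (2 - α₀) := lt_min h0 (by linarith)
    positivity
  have hεa : ε < α₀ := by have := min_le_left α₀ (2 - α₀); rw [hεdef]; linarith
  have hεb : ε < 2 - α₀ := by have := min_le_right α₀ (2 - α₀); rw [hεdef]; linarith
  obtain ⟨B, hBint, hB⟩ := main_bound hC (show 0 < α₀ - ε by linarith)
    (show α₀ + ε < 2 by linarith) (by linarith) hg
  have hball : ∀ x ∈ Metric.ball α₀ ε, x ∈ Icc (α₀ - ε) (α₀ + ε) := by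
    intro x hx
    rw [Metric.mem_ball, Real.dist_eq, abs_lt] at hx
    constructor <;> linarith [hx.1, hx.2]
  have hballpos : ∀ x ∈ Metric.ball α₀ ε, 0 < x := fun x hx => by
    have := (hball x hx).1; linarith
  have hbound2 : ∀ x ∈ Icc (α₀ - ε) (α₀ + ε), ∀ z : ℝ,
      ‖-(g z * Real.log (abs z) / |z| ^ (1 + x))‖ ≤ B z := by
    intro x hx z
    have hT : (0:ℝ) ≤ |z| ^ (1 + x) := Real.rpow_nonneg (abs_nonneg z) _
    have : ‖-(g z * Real.log (abs z) / |z| ^ (1 + x))‖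
        = |g z| * |Real.log (abs z)| / |z| ^ (1 + x) := by
      rw [norm_neg, Real.norm_eq_abs, abs_div, abs_mul, abs_of_nonneg hT]
    rw [this]
    refine le_trans ?_ (hB x hx z)
    apply div_le_div_of_nonneg_right ?_ hT |>.trans_eq rfl
    have h1 : |Real.log (abs z)| ≤ 1 + |Real.log (abs z)| := by linarith [abs_nonneg (Real.log (abs z))]
    exact mul_le_mul_of_nonneg_left h1 (abs_nonneg _)
  have hbound1 : ∀ x ∈ Icc (α₀ - ε) (α₀ + ε), ∀ z : ℝ,
      ‖g z / |z| ^ (1 + x)‖ ≤ B z := by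
    intro x hx z
    have hT : (0:ℝ) ≤ |z| ^ (1 + x) := Real.rpow_nonneg (abs_nonneg z) _
    have : ‖g z / |z| ^ (1 + x)‖ = |g z| / |z| ^ (1 + x) := by
      rw [Real.norm_eq_abs, abs_div, abs_of_nonneg hT]
    rw [this]
    refine le_trans ?_ (hB x hx z)
    apply div_le_div_of_nonneg_right ?_ hT |>.trans_eq rfl
    nlinarith [abs_nonneg (Real.log (abs z)), abs_nonneg (g z)]
  have hα₀I : α₀ ∈ Icc (α₀ - ε) (α₀ + ε) := ⟨by linarith, by linarith⟩
  have key := hasDerivAt_integral_of_dominated_loc_of_deriv_le (Metric.ball_mem_nhds α₀ hε)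
    ((lt_mem_nhds h0).mono fun x hx => meas_F hgm x hx)
    ?_ (meas_F' hgm α₀ h0)
    (Filter.Eventually.of_forall fun z x hx => hbound2 x (hball x hx) z)
    hBint
    (Filter.Eventually.of_forall fun z x hx => pt_deriv hg z x (hballpos x hx))
  · refine key.2.congr_deriv ?_
    rw [integral_neg]
  · exact (Integrable.mono' hBint (meas_F hgm α₀ h0)
      (Filter.Eventually.of_forall fun z => hbound1 α₀ hα₀I z))

private lemma cont_main {g : ℝ → ℝ} (hgm : Measurable g) {C : ℝ} (hC : 0 ≤ C)
    (hg : ∀ z, |g z| ≤ C * min (z ^ 2) 1) {α₀ : ℝ} (hα₀ : α₀ ∈ Ioo (0:ℝ) 2) :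
    ContinuousAt (fun α : ℝ => -∫ z : ℝ, g z * Real.log (abs z) / |z| ^ (1 + α)) α₀ := by
  obtain ⟨h0, h2⟩ := hα₀
  set ε := min α₀ (2 - α₀) / 2 with hεdef
  have hε : 0 < ε := by
    have : 0 < min α₀ (2 - α₀) := lt_min h0 (by linarith)
    positivity
  have hεa : ε < α₀ := by have := min_le_left α₀ (2 - α₀); rw [hεdef]; linarith
  have hεb : ε < 2 - α₀ := by have := min_le_right α₀ (2 - α₀); rw [hεdef]; linarith
  obtain ⟨B, hBint, hB⟩ := main_bound hC (show 0 < α₀ - ε by linarith)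
    (show α₀ + ε < 2 by linarith) (by linarith) hg
  apply ContinuousAt.neg
  apply continuousAt_of_dominated (bound := B)
  · filter_upwards [lt_mem_nhds h0] with x hx
    have h1 : Measurable fun z : ℝ => |z| ^ (1 + x) :=
      ((Real.continuous_rpow_const (by linarith)).comp continuous_abs).measurable
    have h2 : Measurable fun z : ℝ => Real.log (abs z) := Real.measurable_log.comp measurable_abs
    exact ((hgm.mul h2).div h1).aestronglyMeasurable
  · filter_upwards [Icc_mem_nhds (show α₀ - ε < α₀ by linarith) (show α₀ < α₀ + ε by linarith)]
      with x hx
    refine Filter.Eventually.of_forall fun z => ?_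
    have hT : (0:ℝ) ≤ |z| ^ (1 + x) := Real.rpow_nonneg (abs_nonneg z) _
    have heq : ‖g z * Real.log (abs z) / |z| ^ (1 + x)‖
        = |g z| * |Real.log (abs z)| / |z| ^ (1 + x) := by
      rw [Real.norm_eq_abs, abs_div, abs_mul, abs_of_nonneg hT]
    rw [heq]
    refine le_trans ?_ (hB x hx z)
    apply div_le_div_of_nonneg_right ?_ hT |>.trans_eq rfl
    have h1 : |Real.log (abs z)| ≤ 1 + |Real.log (abs z)| := by
      linarith [abs_nonneg (Real.log (abs z))]
    exact mul_le_mul_of_nonneg_left h1 (abs_nonneg _)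
  · exact hBint
  · refine Filter.Eventually.of_forall fun z => ?_
    rcases eq_or_ne z 0 with rfl | hz
    · have hfun : (fun x : ℝ => g 0 * Real.log (abs 0) / |(0:ℝ)| ^ (1 + x)) = fun _ => (0:ℝ) := by
        funext x; simp
      rw [hfun]
      exact continuousAt_const
    · have hz' : 0 < |z| := abs_pos.2 hz
      have hden : ContinuousAt (fun x : ℝ => |z| ^ (1 + x)) α₀ := by
        exact (Real.continuousAt_const_rpow hz'.ne').comp
          (continuousAt_const.add continuousAt_id)
      exact continuousAt_const.div hden (ne_of_gt (Real.rpow_pos_of_pos hz' _))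

theorem stmt8 (f : ℝ → ℝ) (hf : ContDiff ℝ 2 f)
    (hfb : BddAbove (Set.range fun x => |f x|))
    (hfb2 : BddAbove (Set.range fun x => |iteratedDeriv 2 f x|)) :
    ContDiffOn ℝ 1
      (fun α : ℝ =>
        ∫ z : ℝ, (f z - f 0 - deriv f 0 * (if |z| ≤ 1 then z else 0)) / |z| ^ (1 + α))
      (Set.Ioo 0 2) ∧
    ∀ α ∈ Set.Ioo (0 : ℝ) 2,
      HasDerivAt
        (fun α : ℝ =>
          ∫ z : ℝ, (f z - f 0 - deriv f 0 * (if |z| ≤ 1 then z else 0)) / |z| ^ (1 + α))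
        (-∫ z : ℝ,
            (f z - f 0 - deriv f 0 * (if |z| ≤ 1 then z else 0)) * Real.log |z| / |z| ^ (1 + α))
        α := by
  set M0 := sSup (Set.range fun x => |f x|) with hM0def
  have hM0 : ∀ x, |f x| ≤ M0 := fun x => le_csSup hfb ⟨x, rfl⟩
  have hM0nn : 0 ≤ M0 := le_trans (abs_nonneg (f 0)) (hM0 0)
  set M2 := sSup (Set.range fun x => |iteratedDeriv 2 f x|) with hM2def
  have hM2 : ∀ x, |iteratedDeriv 2 f x| ≤ M2 := fun x => le_csSup hfb2 ⟨x, rfl⟩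
  have hM2nn : 0 ≤ M2 := le_trans (abs_nonneg _) (hM2 0)
  have hd1 : Differentiable ℝ f := hf.differentiable (by norm_num)
  have hf' : ContDiff ℝ 1 (deriv f) := by
    rw [show (2 : WithTop ℕ∞) = 1 + 1 from rfl, contDiff_succ_iff_deriv] at hf
    exact hf.2.2
  have hd2 : Differentiable ℝ (deriv f) := hf'.differentiable (by norm_num)
  have hM2' : ∀ x, ‖deriv (deriv f) x‖ ≤ M2 := by
    intro x
    have : iteratedDeriv 2 f x = deriv (deriv f) x := by
      rw [show (2:ℕ) = 1 + 1 from rfl, iteratedDeriv_succ, iteratedDeriv_one]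
    rw [Real.norm_eq_abs, ← this]
    exact hM2 x
  have Lip : ∀ t, |deriv f t - deriv f 0| ≤ M2 * |t| := by
    intro t
    have := Convex.norm_image_sub_le_of_norm_deriv_le (f := deriv f) (s := Set.univ)
      (fun x _ => (hd2 x)) (fun x _ => hM2' x) convex_univ (Set.mem_univ 0) (Set.mem_univ t)
    simpa using this
  have Taylor : ∀ z, |f z - f 0 - deriv f 0 * z| ≤ M2 * z ^ 2 := by
    intro z
    have habs : ∀ t ∈ uIcc (0:ℝ) z, |t| ≤ |z| := by
      intro t ht
      rcases le_total (0:ℝ) z with h | h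
      · rw [uIcc_of_le h] at ht
        rw [abs_of_nonneg ht.1, abs_of_nonneg h]; exact ht.2
      · rw [uIcc_of_ge h] at ht
        rw [abs_of_nonpos ht.2, abs_of_nonpos h]; linarith [ht.1]
    have hder : ∀ t ∈ uIcc (0:ℝ) z, HasDerivWithinAt (fun t => f t - f 0 - deriv f 0 * t)
        (deriv f t - deriv f 0) (uIcc (0:ℝ) z) t := by
      intro t _
      have h1 : HasDerivAt (fun t => f t - f 0 - deriv f 0 * t) (deriv f t - deriv f 0 * 1) t :=
        ((hd1 t).hasDerivAt.sub_const (f 0)).sub ((hasDerivAt_id t).const_mul (deriv f 0))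
      simpa using h1.hasDerivWithinAt
    have hbd : ∀ t ∈ uIcc (0:ℝ) z, ‖deriv f t - deriv f 0‖ ≤ M2 * |z| := by
      intro t ht
      rw [Real.norm_eq_abs]
      exact (Lip t).trans (mul_le_mul_of_nonneg_left (habs t ht) hM2nn)
    have key := Convex.norm_image_sub_le_of_norm_hasDerivWithin_le hder hbd
      (convex_uIcc (0:ℝ) z) left_mem_uIcc right_mem_uIcc
    simp only [mul_zero, sub_zero, Real.norm_eq_abs] at key
    calc |f z - f 0 - deriv f 0 * z| = |f z - f 0 - deriv f 0 * z - (f 0 - f 0)| := by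
          rw [sub_self, sub_zero]
      _ ≤ M2 * |z| * |z| := key
      _ = M2 * z ^ 2 := by rw [mul_assoc, abs_mul_abs_self, sq]
  set g : ℝ → ℝ := fun z => f z - f 0 - deriv f 0 * (if |z| ≤ 1 then z else 0) with hgdef
  have hgm : Measurable g := by
    have hif : Measurable fun z : ℝ => (if |z| ≤ 1 then z else (0:ℝ)) :=
      Measurable.ite (measurableSet_le measurable_abs measurable_const) measurable_id
        measurable_const
    exact ((hf.continuous.measurable.sub measurable_const).sub (measurable_const.mul hif))
  have hCnn : (0:ℝ) ≤ M2 + 2 * M0 := by linarith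
  have hgb : ∀ z, |g z| ≤ (M2 + 2 * M0) * min (z ^ 2) 1 := by
    intro z
    rw [hgdef]
    beta_reduce
    by_cases h1 : |z| ≤ 1
    · rw [if_pos h1]
      have hsq : z ^ 2 ≤ 1 := by simpa [sq_abs] using pow_le_one₀ (abs_nonneg z) h1 (n := 2)
      rw [min_eq_left hsq]
      refine (Taylor z).trans ?_
      nlinarith [sq_nonneg z]
    · rw [if_neg h1]
      push_neg at h1
      have hsq : (1:ℝ) ≤ z ^ 2 := by rw [← sq_abs]; exact one_le_pow₀ h1.le
      rw [min_eq_right hsq, mul_zero, sub_zero, mul_one]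
      calc |f z - f 0| ≤ |f z| + |f 0| := abs_sub _ _
        _ ≤ M0 + M0 := add_le_add (hM0 z) (hM0 0)
        _ ≤ M2 + 2 * M0 := by linarith
  have hD : ∀ α ∈ Ioo (0:ℝ) 2,
      HasDerivAt (fun α : ℝ => ∫ z : ℝ, g z / |z| ^ (1 + α))
        (-∫ z : ℝ, g z * Real.log (abs z) / |z| ^ (1 + α)) α :=
    fun α hα => hasDeriv_main hgm hCnn hgb hα
  refine ⟨?_, fun α hα => hD α hα⟩
  rw [show (1 : WithTop ℕ∞) = 0 + 1 from rfl, contDiffOn_succ_iff_deriv_of_isOpen isOpen_Ioo]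
  refine ⟨fun α hα => (hD α hα).differentiableAt.differentiableWithinAt, ?_, ?_⟩
  · intro h; simp at h
  · rw [contDiffOn_zero]
    have hDcont : ContinuousOn
        (fun α : ℝ => -∫ z : ℝ, g z * Real.log (abs z) / |z| ^ (1 + α)) (Ioo 0 2) :=
      fun α hα => (cont_main hgm hCnn hgb hα).continuousWithinAt
    exact hDcont.congr fun α hα => (hD α hα).deriv
end
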